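/- (Factorization formula) For every positive integer a, all rationals μ and ν, and every z = x + iy ∈ ℂ with y > 0: ∑_{(m,n)∈ℤ×ℤ} e^{2πi(mν + nμ)} · e^{π(imn − |mz−n|²/(2y))/a} = √(2ay) · θ[aμ; ν](z/a) · θ[μ; −aν](−a·conj(z)), where conj(z) = x − iy. -/

import Mathlib

open Complex Real

noncomputable def thetaChar (μ ν : ℚ) (w : ℂ) : ℂ :=
  ∑' n : ℤ, Complex.exp (Real.pi * Complex.I * ((n : ℂ) + (μ : ℂ)) ^ 2 * w
    + 2 * Real.pi * Complex.I * (ν : ℂ) * ((n : ℂ) + (μ : ℂ)))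

private lemma norm_cexp_pair (r s : ℝ) : ‖Complex.exp ((r:ℂ) + (s:ℂ)*Complex.I)‖ = Real.exp r := by
  rw [Complex.norm_exp]
  simp

private lemma pair_add_eq {r1 s1 r2 s2 r3 s3 r4 s4 : ℝ} (hr : r1+r2 = r3+r4) (hs : s1+s2 = s3+s4) :
    ((r1:ℂ) + (s1:ℂ)*Complex.I) + ((r2:ℂ)+(s2:ℂ)*Complex.I)
    = ((r3:ℂ)+(s3:ℂ)*Complex.I) + ((r4:ℂ)+(s4:ℂ)*Complex.I) := by
  have hr' := congrArg (fun t:ℝ => (t:ℂ)) hr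
  have hs' := congrArg (fun t:ℝ => (t:ℂ)) hs
  push_cast at hr' hs'
  linear_combination hr' + hs' * Complex.I

private lemma theta_term_canon (μ' ν' : ℚ) (u v : ℝ) (n : ℤ) :
    (Real.pi : ℂ) * Complex.I * ((n : ℂ) + (μ' : ℂ)) ^ 2 * ((u:ℂ) + (v:ℂ)*Complex.I)
      + 2 * Real.pi * Complex.I * (ν' : ℂ) * ((n : ℂ) + (μ' : ℂ))
    = ((-Real.pi * ((n:ℝ) + (μ':ℝ))^2 * v : ℝ) : ℂ)
      + ((Real.pi * ((n:ℝ) + (μ':ℝ))^2 * u + 2*Real.pi*(ν':ℝ)*((n:ℝ)+(μ':ℝ)) : ℝ) : ℂ) * Complex.I := by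
  push_cast
  linear_combination ((Real.pi:ℂ) * ((n:ℂ)+(μ':ℂ))^2 * (v:ℂ)) * Complex.I_sq

private lemma quad_canon (p u v : ℝ) (k : ℤ) :
    ((p:ℂ) * ((k:ℂ) + Complex.I*((u:ℂ) + Complex.I*(v:ℂ)))^2 : ℂ)
    = ((p*(((k:ℝ)-v)^2 - u^2) : ℝ) : ℂ) + ((2*p*((k:ℝ)-v)*u : ℝ) : ℂ) * Complex.I := by
  push_cast
  linear_combination ((p:ℂ)*(v:ℂ)^2*(Complex.I^2-1) + 2*(p:ℂ)*(u:ℂ)*(v:ℂ)*Complex.I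
    + (p:ℂ)*((u:ℂ)^2+2*(k:ℂ)*(v:ℂ))) * Complex.I_sq

private lemma posdef (x y : ℝ) (u v : ℝ) :
    y^2/(2*(1+x^2+y^2)) * (u^2+v^2) ≤ (u*x-v)^2 + u^2*y^2 := by
  rw [div_mul_eq_mul_div, div_le_iff₀ (by positivity)]
  nlinarith [sq_nonneg (y*(2*u*x-v)), sq_nonneg (u*x-v), mul_nonneg (sq_nonneg x) (sq_nonneg (u*x-v)),
    mul_nonneg (sq_nonneg u) (sq_nonneg y), mul_nonneg (sq_nonneg (u*y)) (sq_nonneg y)]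

private lemma summable_gauss (c : ℝ) (hc : 0 < c) : Summable fun n : ℤ => Real.exp (-c * (n:ℝ)^2) := by
  have h : Summable (fun n : ℤ => jacobiTheta₂_term n 0 (Complex.I * ((c/Real.pi : ℝ) : ℂ))) := by
    rw [summable_jacobiTheta₂_term_iff]
    simpa using div_pos hc Real.pi_pos
  refine (summable_norm_iff.mpr h).congr fun n => ?_
  rw [norm_jacobiTheta₂_term]
  congr 1
  simp only [Complex.mul_im, Complex.I_re, Complex.I_im, Complex.ofReal_re, Complex.ofReal_im,
    Complex.zero_im]
  field_simp
  ring

private lemma summable_gauss2 (c : ℝ) (hc : 0 < c) :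
    Summable fun p : ℤ×ℤ => Real.exp (-c*(p.1:ℝ)^2) * Real.exp (-c*(p.2:ℝ)^2) :=
  (summable_gauss c hc).mul_of_nonneg (summable_gauss c hc)
    (fun _ => (Real.exp_pos _).le) (fun _ => (Real.exp_pos _).le)

private def swapEquiv (a : ℕ) : (ℤ×ℤ) ≃ (ℤ×ℤ) where
  toFun q := (q.1 - a*q.2, -q.2)
  invFun q := (q.1 - a*q.2, -q.2)
  left_inv q := by rcases q with ⟨j,k⟩; simp [Prod.ext_iff]
  right_inv q := by rcases q with ⟨j,k⟩; simp [Prod.ext_iff]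

private noncomputable def bC (a : ℕ) (μ : ℚ) (x y : ℝ) (m : ℤ) : ℂ :=
  (((m:ℝ)*x/(2*(a:ℝ)*y) : ℝ) : ℂ) + Complex.I*((((μ:ℚ):ℝ) + (m:ℝ)/(2*(a:ℝ)) : ℝ) : ℂ)

private noncomputable def CC (a : ℕ) (ν : ℚ) (x y : ℝ) (m : ℤ) : ℂ :=
  ((-Real.pi*(m:ℝ)^2*x^2/(2*(a:ℝ)*y) - Real.pi*(m:ℝ)^2*y/(2*(a:ℝ)) : ℝ) : ℂ)
  + ((2*Real.pi*(m:ℝ)*((ν:ℚ):ℝ) : ℝ) : ℂ)*Complex.I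

private noncomputable def GG (a : ℕ) (μ : ℚ) (x y : ℝ) (m k : ℤ) : ℂ :=
  ((-(2*Real.pi*(a:ℝ)*y) * (((k:ℝ) - (((μ:ℚ):ℝ) + (m:ℝ)/(2*(a:ℝ))))^2 - ((m:ℝ)*x/(2*(a:ℝ)*y))^2) : ℝ) : ℂ)
  + ((2*(-(2*Real.pi*(a:ℝ)*y))*((k:ℝ) - (((μ:ℚ):ℝ) + (m:ℝ)/(2*(a:ℝ))))*((m:ℝ)*x/(2*(a:ℝ)*y)) : ℝ) : ℂ)*Complex.I

private noncomputable def TT1 (a : ℕ) (μ ν : ℚ) (x y : ℝ) (j : ℤ) : ℂ :=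
  Complex.exp (((-Real.pi * ((j:ℝ) + (((a:ℚ)*μ : ℚ):ℝ))^2 * (y/(a:ℝ)) : ℝ) : ℂ)
    + ((Real.pi * ((j:ℝ) + (((a:ℚ)*μ:ℚ):ℝ))^2 * (x/(a:ℝ)) + 2*Real.pi*((ν:ℚ):ℝ)*((j:ℝ)+(((a:ℚ)*μ:ℚ):ℝ)) : ℝ) : ℂ)*Complex.I)

private noncomputable def TT2 (a : ℕ) (μ ν : ℚ) (x y : ℝ) (k : ℤ) : ℂ :=
  Complex.exp (((-Real.pi * ((k:ℝ) + ((μ:ℚ):ℝ))^2 * ((a:ℝ)*y) : ℝ) : ℂ)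
    + ((Real.pi * ((k:ℝ) + ((μ:ℚ):ℝ))^2 * (-((a:ℝ)*x)) + 2*Real.pi*((-(a:ℚ)*ν : ℚ):ℝ)*((k:ℝ)+((μ:ℚ):ℝ)) : ℝ) : ℂ)*Complex.I)

set_option maxHeartbeats 4000000 in
/-- (Factorization formula of Rodriguez-Villegas and Zagier.) For `a ∈ ℤ_{>0}`,
`μ, ν ∈ ℚ` and `z = x + iy` with `y > 0`:
`∑_{(m,n)} e^{2πi(mν+nμ)} e^{π(imn − |mz−n|²/(2y))/a}
  = √(2ay) · θ[aμ; ν](z/a) · θ[μ; −aν](−a·conj z)`. -/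
theorem factorization_formula (a : ℕ) (ha : 0 < a) (μ ν : ℚ) (z : ℂ) (hz : 0 < z.im) :
    ∑' p : ℤ × ℤ,
      Complex.exp (2 * Real.pi * Complex.I * ((p.1 : ℂ) * (ν : ℂ) + (p.2 : ℂ) * (μ : ℂ))) *
        Complex.exp ((Real.pi : ℂ) * (Complex.I * (p.1 : ℂ) * (p.2 : ℂ)
          - (Complex.normSq ((p.1 : ℂ) * z - (p.2 : ℂ)) : ℂ) / (2 * (z.im : ℂ))) / (a : ℂ))
    = (Real.sqrt (2 * a * z.im) : ℂ) * thetaChar ((a : ℚ) * μ) ν (z / (a : ℂ)) *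
        thetaChar μ (-(a : ℚ) * ν) (-(a : ℂ) * (starRingEnd ℂ) z) := by
  set x := z.re with hxdef
  set y := z.im with hydef
  have hy : 0 < y := hz
  have hA : (0:ℝ) < (a:ℝ) := by exact_mod_cast ha
  have haC : ((a:ℕ):ℂ) ≠ 0 := Nat.cast_ne_zero.mpr ha.ne'
  have hyC : ((y:ℝ):ℂ) ≠ 0 := Complex.ofReal_ne_zero.mpr hy.ne'
  have hzeq : z = (x:ℂ) + (y:ℂ)*Complex.I := (Complex.re_add_im z).symm
  have hconj : (starRingEnd ℂ) z = (x:ℂ) - (y:ℂ)*Complex.I := by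
    rw [hzeq]; simp [map_add, map_mul, Complex.conj_I, Complex.conj_ofReal]; ring
  have hz1 : z/((a:ℕ):ℂ) = ((x/(a:ℝ) : ℝ):ℂ) + ((y/(a:ℝ) : ℝ):ℂ)*Complex.I := by
    rw [hzeq]; push_cast; ring
  have hz2 : -((a:ℕ):ℂ) * (starRingEnd ℂ) z = ((-((a:ℝ)*x) : ℝ):ℂ) + (((a:ℝ)*y : ℝ):ℂ)*Complex.I := by
    rw [hconj]; push_cast; ring
  -- normSq
  have hnormSq : ∀ m n : ℤ, Complex.normSq ((m:ℂ)*z - (n:ℂ)) = ((m:ℝ)*x-(n:ℝ))^2 + (m:ℝ)^2*y^2 := by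
    intro m n
    rw [hxdef, hydef, Complex.normSq_apply]
    simp only [Complex.sub_re, Complex.sub_im, Complex.mul_re, Complex.mul_im,
      Complex.intCast_re, Complex.intCast_im]
    push_cast
    ring
  -- split of each term
  have hsplit : ∀ m n : ℤ,
      Complex.exp (2 * Real.pi * Complex.I * ((m : ℂ) * (ν : ℂ) + (n : ℂ) * (μ : ℂ))) *
        Complex.exp ((Real.pi : ℂ) * (Complex.I * (m : ℂ) * (n : ℂ)
          - ((((m:ℝ)*x-(n:ℝ))^2 + (m:ℝ)^2*y^2 : ℝ) : ℂ) / (2 * (y : ℂ))) / (a : ℂ))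
      = Complex.exp (CC a ν x y m) *
        Complex.exp (-(Real.pi:ℂ) * ((1/(2*(a:ℝ)*y) : ℝ) : ℂ) * (n:ℂ)^2
          + 2*(Real.pi:ℂ)*(bC a μ x y m)*(n:ℂ)) := by
    intro m n
    rw [← Complex.exp_add, ← Complex.exp_add]
    congr 1
    simp only [CC, bC]
    push_cast
    field_simp
    ring_nf
  -- norm of split form
  have hYnorm : ∀ m n : ℤ,
      ‖Complex.exp (CC a ν x y m) *
        Complex.exp (-(Real.pi:ℂ) * ((1/(2*(a:ℝ)*y) : ℝ) : ℂ) * (n:ℂ)^2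
          + 2*(Real.pi:ℂ)*(bC a μ x y m)*(n:ℂ))‖
      = Real.exp (-Real.pi*(((m:ℝ)*x-(n:ℝ))^2+(m:ℝ)^2*y^2)/(2*(a:ℝ)*y)) := by
    intro m n
    have hw : (-(Real.pi:ℂ) * ((1/(2*(a:ℝ)*y) : ℝ) : ℂ) * (n:ℂ)^2
          + 2*(Real.pi:ℂ)*(bC a μ x y m)*(n:ℂ))
        = ((-Real.pi*(1/(2*(a:ℝ)*y))*(n:ℝ)^2 + 2*Real.pi*((m:ℝ)*x/(2*(a:ℝ)*y))*(n:ℝ) : ℝ):ℂ)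
          + ((2*Real.pi*(((μ:ℚ):ℝ)+(m:ℝ)/(2*(a:ℝ)))*(n:ℝ) : ℝ):ℂ)*Complex.I := by
      simp only [bC]; push_cast; ring
    rw [hw, norm_mul]
    simp only [CC]
    rw [norm_cexp_pair, norm_cexp_pair, ← Real.exp_add]
    congr 1
    field_simp
    ring
  -- summability of the split form
  have hδ : (0:ℝ) < Real.pi*(y^2/(2*(1+x^2+y^2)))/(2*(a:ℝ)*y) :=
    div_pos (mul_pos Real.pi_pos (div_pos (pow_pos hy 2) (by positivity)))
      (mul_pos (mul_pos two_pos hA) hy)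
  have hS2 : Summable (fun p : ℤ×ℤ => Complex.exp (CC a ν x y p.1) *
        Complex.exp (-(Real.pi:ℂ) * ((1/(2*(a:ℝ)*y) : ℝ) : ℂ) * (p.2:ℂ)^2
          + 2*(Real.pi:ℂ)*(bC a μ x y p.1)*(p.2:ℂ))) := by
    apply Summable.of_norm
    refine Summable.of_nonneg_of_le (fun p => norm_nonneg _) (fun p => ?_)
      (summable_gauss2 (Real.pi*(y^2/(2*(1+x^2+y^2)))/(2*(a:ℝ)*y)) hδ)
    rw [hYnorm p.1 p.2, ← Real.exp_add, Real.exp_le_exp]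
    have hpd := posdef x y (p.1:ℝ) (p.2:ℝ)
    have hc : (0:ℝ) < Real.pi/(2*(a:ℝ)*y) :=
      div_pos Real.pi_pos (mul_pos (mul_pos two_pos hA) hy)
    have h3 := mul_le_mul_of_nonneg_left hpd hc.le
    have hkey : Real.pi/(2*(a:ℝ)*y) * (y^2/(2*(1+x^2+y^2)) * ((p.1:ℝ)^2+(p.2:ℝ)^2))
        = Real.pi*(y^2/(2*(1+x^2+y^2)))/(2*(a:ℝ)*y)*(p.1:ℝ)^2
          + Real.pi*(y^2/(2*(1+x^2+y^2)))/(2*(a:ℝ)*y)*(p.2:ℝ)^2 := by ring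
    rw [hkey] at h3
    have hkey2 : -Real.pi*(((p.1:ℝ)*x-(p.2:ℝ))^2+(p.1:ℝ)^2*y^2)/(2*(a:ℝ)*y)
        = -(Real.pi/(2*(a:ℝ)*y) * (((p.1:ℝ)*x-(p.2:ℝ))^2+(p.1:ℝ)^2*y^2)) := by ring
    rw [hkey2]
    linarith [h3]
  -- Poisson per m
  have hre : 0 < (((1/(2*(a:ℝ)*y) : ℝ)):ℂ).re := by
    rw [Complex.ofReal_re]
    exact div_pos one_pos (mul_pos (mul_pos two_pos hA) hy)
  have hsqrt : 1/(((1/(2*(a:ℝ)*y) : ℝ)):ℂ)^(1/2 : ℂ) = ((Real.sqrt (2*(a:ℝ)*y) : ℝ) : ℂ) := by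
    have h2ay : (0:ℝ) < 2*(a:ℝ)*y := mul_pos (mul_pos two_pos hA) hy
    rw [show (1/2 : ℂ) = ((1/2 : ℝ) : ℂ) by norm_num,
      ← Complex.ofReal_cpow (by positivity) (1/2)]
    rw [show (1:ℂ) = ((1:ℝ):ℂ) by norm_num, ← Complex.ofReal_div]
    congr 1
    rw [← Real.sqrt_eq_rpow, one_div (2*(a:ℝ)*y), Real.sqrt_inv, one_div, inv_inv]
  have hfrac : -(Real.pi:ℂ)/((1/(2*(a:ℝ)*y) : ℝ):ℂ) = ((-(2*Real.pi*(a:ℝ)*y) : ℝ):ℂ) := by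
    push_cast
    field_simp
  have hinner : ∀ m : ℤ,
      (∑' n : ℤ, Complex.exp (CC a ν x y m) *
        Complex.exp (-(Real.pi:ℂ) * ((1/(2*(a:ℝ)*y) : ℝ) : ℂ) * (n:ℂ)^2
          + 2*(Real.pi:ℂ)*(bC a μ x y m)*(n:ℂ)))
      = Complex.exp (CC a ν x y m) * (((Real.sqrt (2*(a:ℝ)*y) : ℝ) : ℂ)
          * ∑' k : ℤ, Complex.exp (GG a μ x y m k)) := by
    intro m
    rw [tsum_mul_left]
    congr 1
    rw [Complex.tsum_exp_neg_quadratic hre (bC a μ x y m), hsqrt]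
    congr 1
    refine tsum_congr fun k => ?_
    have : -(Real.pi:ℂ) / ((1/(2*(a:ℝ)*y) : ℝ):ℂ) * ((k:ℂ) + Complex.I * bC a μ x y m)^2
        = GG a μ x y m k := by
      rw [hfrac]
      simp only [bC, GG]
      exact quad_canon (-(2*Real.pi*(a:ℝ)*y)) ((m:ℝ)*x/(2*(a:ℝ)*y))
        (((μ:ℚ):ℝ) + (m:ℝ)/(2*(a:ℝ))) k
    rw [this]
  -- theta sums
  have him1 : 0 < (z/((a:ℕ):ℂ)).im := by
    rw [hz1]
    simp only [Complex.add_im, Complex.ofReal_im, Complex.mul_im, Complex.I_im, Complex.I_re,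
      Complex.ofReal_re, zero_add, mul_one, mul_zero, add_zero]
    positivity
  have him2 : 0 < (-((a:ℕ):ℂ) * (starRingEnd ℂ) z).im := by
    rw [hz2]
    simp only [Complex.add_im, Complex.ofReal_im, Complex.mul_im, Complex.I_im, Complex.I_re,
      Complex.ofReal_re, zero_add, mul_one, mul_zero, add_zero]
    exact mul_pos hA hy
  have hsumT1 : Summable (fun j : ℤ => TT1 a μ ν x y j) := by
    have hj := (summable_jacobiTheta₂_term_iff
      ((((a:ℚ)*μ : ℚ):ℂ)*(z/((a:ℕ):ℂ)) + ((ν:ℚ):ℂ)) (z/((a:ℕ):ℂ))).mpr him1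
    refine (hj.mul_left (Complex.exp ((Real.pi:ℂ)*Complex.I*(((a:ℚ)*μ:ℚ):ℂ)^2*(z/((a:ℕ):ℂ))
      + 2*(Real.pi:ℂ)*Complex.I*((ν:ℚ):ℂ)*(((a:ℚ)*μ:ℚ):ℂ)))).congr fun j => ?_
    rw [jacobiTheta₂_term, ← Complex.exp_add]
    have h1 : (Real.pi:ℂ)*Complex.I*(((a:ℚ)*μ:ℚ):ℂ)^2*(z/((a:ℕ):ℂ))
        + 2*(Real.pi:ℂ)*Complex.I*((ν:ℚ):ℂ)*(((a:ℚ)*μ:ℚ):ℂ)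
        + (2*(Real.pi:ℂ)*Complex.I*(j:ℂ)*((((a:ℚ)*μ:ℚ):ℂ)*(z/((a:ℕ):ℂ)) + ((ν:ℚ):ℂ))
          + (Real.pi:ℂ)*Complex.I*(j:ℂ)^2*(z/((a:ℕ):ℂ)))
        = (Real.pi:ℂ) * Complex.I * ((j:ℂ) + (((a:ℚ)*μ:ℚ):ℂ))^2 * (z/((a:ℕ):ℂ))
          + 2*(Real.pi:ℂ)*Complex.I*((ν:ℚ):ℂ)*((j:ℂ)+(((a:ℚ)*μ:ℚ):ℂ)) := by
      push_cast; ring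
    rw [h1, hz1]
    simp only [TT1]
    exact congrArg Complex.exp (theta_term_canon ((a:ℚ)*μ) ν (x/(a:ℝ)) (y/(a:ℝ)) j)
  have hsumT2 : Summable (fun k : ℤ => TT2 a μ ν x y k) := by
    have hj := (summable_jacobiTheta₂_term_iff
      (((μ:ℚ):ℂ)*(-((a:ℕ):ℂ) * (starRingEnd ℂ) z) + ((-(a:ℚ)*ν : ℚ):ℂ))
      (-((a:ℕ):ℂ) * (starRingEnd ℂ) z)).mpr him2
    refine (hj.mul_left (Complex.exp ((Real.pi:ℂ)*Complex.I*((μ:ℚ):ℂ)^2*(-((a:ℕ):ℂ) * (starRingEnd ℂ) z)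
      + 2*(Real.pi:ℂ)*Complex.I*((-(a:ℚ)*ν:ℚ):ℂ)*((μ:ℚ):ℂ)))).congr fun k => ?_
    rw [jacobiTheta₂_term, ← Complex.exp_add]
    have h1 : (Real.pi:ℂ)*Complex.I*((μ:ℚ):ℂ)^2*(-((a:ℕ):ℂ) * (starRingEnd ℂ) z)
        + 2*(Real.pi:ℂ)*Complex.I*((-(a:ℚ)*ν:ℚ):ℂ)*((μ:ℚ):ℂ)
        + (2*(Real.pi:ℂ)*Complex.I*(k:ℂ)*(((μ:ℚ):ℂ)*(-((a:ℕ):ℂ) * (starRingEnd ℂ) z) + ((-(a:ℚ)*ν:ℚ):ℂ))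
          + (Real.pi:ℂ)*Complex.I*(k:ℂ)^2*(-((a:ℕ):ℂ) * (starRingEnd ℂ) z))
        = (Real.pi:ℂ) * Complex.I * ((k:ℂ) + ((μ:ℚ):ℂ))^2 * (-((a:ℕ):ℂ) * (starRingEnd ℂ) z)
          + 2*(Real.pi:ℂ)*Complex.I*((-(a:ℚ)*ν:ℚ):ℂ)*((k:ℂ)+((μ:ℚ):ℂ)) := by
      push_cast; ring
    rw [h1, hz2]
    simp only [TT2]
    exact congrArg Complex.exp (theta_term_canon μ (-(a:ℚ)*ν) (-((a:ℝ)*x)) ((a:ℝ)*y) k)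
  have hθ1 : thetaChar ((a:ℚ)*μ) ν (z/((a:ℕ):ℂ)) = ∑' j : ℤ, TT1 a μ ν x y j := by
    unfold thetaChar
    refine tsum_congr fun n => ?_
    rw [hz1]
    simp only [TT1]
    exact congrArg Complex.exp (theta_term_canon ((a:ℚ)*μ) ν (x/(a:ℝ)) (y/(a:ℝ)) n)
  have hθ2 : thetaChar μ (-(a:ℚ)*ν) (-((a:ℕ):ℂ) * (starRingEnd ℂ) z) = ∑' k : ℤ, TT2 a μ ν x y k := by
    unfold thetaChar
    refine tsum_congr fun n => ?_
    rw [hz2]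
    simp only [TT2]
    exact congrArg Complex.exp (theta_term_canon μ (-(a:ℚ)*ν) (-((a:ℝ)*x)) ((a:ℝ)*y) n)
  -- key exponent identity
  have hstar : ∀ j k : ℤ, Complex.exp (CC a ν x y (j - (a:ℤ)*k)) *
      Complex.exp (GG a μ x y (j - (a:ℤ)*k) (-k)) = TT1 a μ ν x y j * TT2 a μ ν x y k := by
    intro j k
    simp only [CC, GG, TT1, TT2]
    rw [← Complex.exp_add, ← Complex.exp_add]
    congr 1
    refine pair_add_eq ?_ ?_
    · push_cast; field_simp; ring
    · push_cast; field_simp; ring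
  have hT1T2sum : Summable (fun q : ℤ×ℤ => TT1 a μ ν x y q.1 * TT2 a μ ν x y q.2) :=
    summable_mul_of_summable_norm (summable_norm_iff.mpr hsumT1) (summable_norm_iff.mpr hsumT2)
  have hH : Summable (fun p : ℤ×ℤ => Complex.exp (CC a ν x y p.1) * Complex.exp (GG a μ x y p.1 p.2)) := by
    rw [← (swapEquiv a).summable_iff]
    exact hT1T2sum.congr fun q => (hstar q.1 q.2).symm
  -- main computation
  calc
    ∑' p : ℤ × ℤ,
      Complex.exp (2 * Real.pi * Complex.I * ((p.1 : ℂ) * (ν : ℂ) + (p.2 : ℂ) * (μ : ℂ))) *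
        Complex.exp ((Real.pi : ℂ) * (Complex.I * (p.1 : ℂ) * (p.2 : ℂ)
          - (Complex.normSq ((p.1 : ℂ) * z - (p.2 : ℂ)) : ℂ) / (2 * (y : ℂ))) / (a : ℂ))
      = ∑' p : ℤ × ℤ, Complex.exp (CC a ν x y p.1) *
          Complex.exp (-(Real.pi:ℂ) * ((1/(2*(a:ℝ)*y) : ℝ) : ℂ) * (p.2:ℂ)^2
            + 2*(Real.pi:ℂ)*(bC a μ x y p.1)*(p.2:ℂ)) := by
        refine tsum_congr fun p => ?_
        rw [hnormSq p.1 p.2]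
        exact hsplit p.1 p.2
    _ = ∑' m : ℤ, ∑' n : ℤ, Complex.exp (CC a ν x y m) *
          Complex.exp (-(Real.pi:ℂ) * ((1/(2*(a:ℝ)*y) : ℝ) : ℂ) * (n:ℂ)^2
            + 2*(Real.pi:ℂ)*(bC a μ x y m)*(n:ℂ)) := Summable.tsum_prod hS2
    _ = ∑' m : ℤ, Complex.exp (CC a ν x y m) * (((Real.sqrt (2*(a:ℝ)*y) : ℝ) : ℂ)
          * ∑' k : ℤ, Complex.exp (GG a μ x y m k)) := tsum_congr fun m => hinner m
    _ = ((Real.sqrt (2*(a:ℝ)*y) : ℝ) : ℂ) * ∑' m : ℤ, ∑' k : ℤ,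
          Complex.exp (CC a ν x y m) * Complex.exp (GG a μ x y m k) := by
        have hswap : ∀ m : ℤ, Complex.exp (CC a ν x y m) * (((Real.sqrt (2*(a:ℝ)*y) : ℝ) : ℂ)
            * ∑' k : ℤ, Complex.exp (GG a μ x y m k))
            = ((Real.sqrt (2*(a:ℝ)*y) : ℝ) : ℂ)
              * ∑' k : ℤ, Complex.exp (CC a ν x y m) * Complex.exp (GG a μ x y m k) := by
          intro m
          rw [tsum_mul_left (a := Complex.exp (CC a ν x y m))
            (f := fun k : ℤ => Complex.exp (GG a μ x y m k))]
          ring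
        simp only [hswap]
        exact tsum_mul_left
    _ = ((Real.sqrt (2*(a:ℝ)*y) : ℝ) : ℂ) * ∑' p : ℤ×ℤ,
          Complex.exp (CC a ν x y p.1) * Complex.exp (GG a μ x y p.1 p.2) := by
        rw [← Summable.tsum_prod hH]
    _ = ((Real.sqrt (2*(a:ℝ)*y) : ℝ) : ℂ) * ∑' q : ℤ×ℤ, TT1 a μ ν x y q.1 * TT2 a μ ν x y q.2 := by
        congr 1
        rw [← (swapEquiv a).tsum_eq (fun p : ℤ×ℤ =>
          Complex.exp (CC a ν x y p.1) * Complex.exp (GG a μ x y p.1 p.2))]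
        exact tsum_congr fun q => hstar q.1 q.2
    _ = ((Real.sqrt (2*(a:ℝ)*y) : ℝ) : ℂ) * ((∑' j : ℤ, TT1 a μ ν x y j) * ∑' k : ℤ, TT2 a μ ν x y k) := by
        congr 1
        rw [Summable.tsum_prod hT1T2sum, ← tsum_mul_right]
        exact tsum_congr fun j => tsum_mul_left (a := TT1 a μ ν x y j)
          (f := fun k : ℤ => TT2 a μ ν x y k)
    _ = (Real.sqrt (2 * a * y) : ℂ) * thetaChar ((a : ℚ) * μ) ν (z / (a : ℂ)) *
        thetaChar μ (-(a : ℚ) * ν) (-(a : ℂ) * (starRingEnd ℂ) z) := by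
        rw [hθ1, hθ2]
        push_cast
        ring
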